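/- Let v : ℝ_{>0} → ℝ satisfy v ≥ Mv, where Mv(x) = sup_{i>0}{v(x+i) - c₀i - c₁} with c₀, c₁ > 0. If x satisfies v(x) = Mv(x) and ξ > 0 attains this supremum (i.e., v(x) = v(x+ξ) - c₀ξ - c₁), then v(x+ξ) > Mv(x+ξ). -/
import Mathlib

theorem stmt_8 (c₀ c₁ : ℝ) (hc₀ : 0 < c₀) (hc₁ : 0 < c₁) (v : ℝ → ℝ)
    (hgeq : ∀ z > (0:ℝ), ∀ i > (0:ℝ), v (z + i) - c₀ * i - c₁ ≤ v z)
    (x ξ : ℝ) (hx : 0 < x) (hξ : 0 < ξ)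
    (heq : v x = sSup {y : ℝ | ∃ i > (0:ℝ), y = v (x + i) - c₀ * i - c₁})
    (hatt : v x = v (x + ξ) - c₀ * ξ - c₁) :
    sSup {y : ℝ | ∃ i > (0:ℝ), y = v (x + ξ + i) - c₀ * i - c₁} < v (x + ξ) := by
  have hne : {y : ℝ | ∃ i > (0:ℝ), y = v (x + ξ + i) - c₀ * i - c₁}.Nonempty :=
    ⟨v (x + ξ + 1) - c₀ * 1 - c₁, 1, one_pos, rfl⟩
  have hub : ∀ y ∈ {y : ℝ | ∃ i > (0:ℝ), y = v (x + ξ + i) - c₀ * i - c₁},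
      y ≤ v (x + ξ) - c₁ := by
    rintro y ⟨i, hi, rfl⟩
    have h := hgeq x hx (ξ + i) (by linarith)
    have : x + (ξ + i) = x + ξ + i := by ring
    rw [this] at h
    linarith
  have := csSup_le hne hub
  linarith
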